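/- In the example with two agents having valuations v_i(S) = min(|S|, 2) over four goods and weights w_1 = 10, w_2 = 1: every allocation maximizing utilitarian social welfare gives each agent utility 2, and no such allocation is weighted-envy-free up to one good (WEF1), since agent 1's weighted utility 2/10 is strictly less than (v_1(X_2) − 1)/w_2 = 1. -/

import Mathlib

theorem wef1_failure_example {G : Type*} [DecidableEq G] [Fintype G]
    (hG : Fintype.card G = 4)
    (X₁ X₂ : Finset G) (hdisj : Disjoint X₁ X₂)
    -- X maximizes utilitarian social welfare with v_i(S) = min(|S|,2):
    (hmax : ∀ Y₁ Y₂ : Finset G, Disjoint Y₁ Y₂ →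
      min Y₁.card 2 + min Y₂.card 2 ≤ min X₁.card 2 + min X₂.card 2) :
    min X₁.card 2 = 2 ∧ min X₂.card 2 = 2 ∧
      -- agent 1 weighted-envies agent 2 even up to one good (w₁ = 10, w₂ = 1):
      ¬ (X₂ = ∅ ∨ ∃ g ∈ X₂,
        ((min ((X₂.erase g).card) 2 : ℝ)) / 1 ≤ ((min X₁.card 2 : ℝ)) / 10) := by
  -- find a 2-element subset of univ
  obtain ⟨Y₁, hY₁sub, hY₁card⟩ := Finset.exists_subset_card_eq (s := (Finset.univ : Finset G)) (n := 2)
    (by rw [Finset.card_univ, hG]; norm_num)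
  set Y₂ : Finset G := Finset.univ \ Y₁ with hY₂
  have hY₂card : Y₂.card = 2 := by
    rw [hY₂, Finset.card_sdiff_of_subset (Finset.subset_univ _), Finset.card_univ, hG, hY₁card]
  have hd : Disjoint Y₁ Y₂ := by
    rw [hY₂]; exact Finset.disjoint_sdiff
  have h4 := hmax Y₁ Y₂ hd
  rw [hY₁card, hY₂card] at h4
  simp only [min_self] at h4
  have h1 : min X₁.card 2 = 2 := by omega
  have h2 : min X₂.card 2 = 2 := by omega
  refine ⟨h1, h2, ?_⟩
  rintro (he | ⟨g, hg, hle⟩)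
  · rw [he] at h2; simp at h2
  · have hc2 : 2 ≤ X₂.card := by omega
    have hce : 1 ≤ (X₂.erase g).card := by
      rw [Finset.card_erase_of_mem hg]; omega
    have hmin1 : (1 : ℕ) ≤ min (X₂.erase g).card 2 := le_min hce (by norm_num)
    have hx1 : (2:ℝ) ≤ (X₁.card:ℝ) := by exact_mod_cast (by omega : 2 ≤ X₁.card)
    rw [min_eq_right hx1] at hle
    have hl : (1 : ℝ) ≤ min ((X₂.erase g).card : ℝ) 2 :=
      le_min (by exact_mod_cast hce) (by norm_num)
    linarith
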